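/- For every r with 0 < r < 1, one has (1 − r²)·((2·log(1+r) − r)/r)² ≥ (1 − r)/(1 + r)². -/

import Mathlib

open Real Set

private lemma log_lb_aux (x : ℝ) (hx : 0 ≤ x) :
    8 * x * (3 + 3 * x + x ^ 2) / (3 * (2 + x) ^ 3) ≤ Real.log (1 + x) := by
  set f : ℝ → ℝ := fun t => Real.log (1 + t) - 8 * t * (3 + 3 * t + t ^ 2) / (3 * (2 + t) ^ 3)
    with hf
  have hderiv : ∀ y : ℝ, 0 ≤ y →
      HasDerivAt f (y ^ 4 / ((1 + y) * (2 + y) ^ 4)) y := by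
    intro y hy
    have h1 : (0:ℝ) < 1 + y := by linarith
    have h2 : (0:ℝ) < 2 + y := by linarith
    have hlog : HasDerivAt (fun t : ℝ => Real.log (1 + t)) (1 / (1 + y)) y := by
      have := ((hasDerivAt_id y).const_add (1:ℝ)).log (ne_of_gt h1)
      simpa using this
    have hnum : HasDerivAt (fun t : ℝ => 8 * t * (3 + 3 * t + t ^ 2))
        (24 + 48 * y + 24 * y ^ 2) y := by
      have : HasDerivAt (fun t : ℝ => 8 * t * (3 + 3 * t + t ^ 2))
          (8 * (3 + 3 * y + y ^ 2) + 8 * y * (3 + 2 * y)) y := by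
        have ha : HasDerivAt (fun t : ℝ => 8 * t) 8 y := by
          simpa using (hasDerivAt_id y).const_mul (8:ℝ)
        have hb : HasDerivAt (fun t : ℝ => 3 + 3 * t + t ^ 2) (3 + 2 * y) y := by
          have := ((hasDerivAt_pow 2 y).const_add (3 + 3 * y))
          have h3 : HasDerivAt (fun t : ℝ => 3 + 3 * t + t ^ 2) (0 + 3 + 2 * y) y := by
            exact (((hasDerivAt_const y (3:ℝ)).add
              ((hasDerivAt_id y).const_mul (3:ℝ) |>.congr_deriv (by ring))).add
              ((hasDerivAt_pow 2 y).congr_deriv (by ring)))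
          simpa using h3
        exact ha.mul hb
      convert this using 1; ring
    have hden : HasDerivAt (fun t : ℝ => 3 * (2 + t) ^ 3) (9 * (2 + y) ^ 2) y := by
      have : HasDerivAt (fun t : ℝ => (2 + t) ^ 3) (3 * (2 + y) ^ 2) y := by
        have h := (((hasDerivAt_id y).const_add (2:ℝ)).pow 3)
        simp at h
        exact h
      have h2' := this.const_mul (3:ℝ)
      exact h2'.congr_deriv (by ring)
    have hq : HasDerivAt (fun t : ℝ => 8 * t * (3 + 3 * t + t ^ 2) / (3 * (2 + t) ^ 3))
        (((24 + 48 * y + 24 * y ^ 2) * (3 * (2 + y) ^ 3)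
          - 8 * y * (3 + 3 * y + y ^ 2) * (9 * (2 + y) ^ 2)) / (3 * (2 + y) ^ 3) ^ 2) y :=
      hnum.div hden (by positivity)
    have := hlog.sub hq
    refine this.congr_deriv ?_
    have h2n : (2 + y) ≠ 0 := ne_of_gt h2
    field_simp
    ring
  have hcont : ContinuousOn f (Ici 0) :=
    fun y hy => ((hderiv y hy).continuousAt).continuousWithinAt
  have hmono : MonotoneOn f (Ici 0) := by
    apply monotoneOn_of_deriv_nonneg (convex_Ici 0) hcont
    · intro y hy
      rw [interior_Ici] at hy
      exact ((hderiv y (le_of_lt hy)).differentiableAt).differentiableWithinAt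
    · intro y hy
      rw [interior_Ici] at hy
      rw [(hderiv y (le_of_lt (mem_Ioi.mp hy))).deriv]
      have hy0 : (0:ℝ) < y := mem_Ioi.mp hy
      exact div_nonneg (by positivity) (mul_nonneg (by linarith) (by positivity))
  have h0 : f 0 = 0 := by simp [hf]
  have := hmono (self_mem_Ici) hx hx
  rw [h0] at this
  simpa [hf, sub_nonneg] using this

/-- `(1 − r²)·((2 log(1+r) − r)/r)² ≥ (1 − r)/(1 + r)²` for `0 < r < 1`. -/
theorem A_half_lower_bound (r : ℝ) (hr0 : 0 < r) (hr1 : r < 1) :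
    (1 - r ^ 2) * ((2 * Real.log (1 + r) - r) / r) ^ 2 ≥ (1 - r) / (1 + r) ^ 2 := by
  have h2 : (0:ℝ) < 2 + r := by linarith
  have h1 : (0:ℝ) < 1 + r := by linarith
  set g : ℝ := (24 + 12 * r - 2 * r ^ 2 - 3 * r ^ 3) / (3 * (2 + r) ^ 3) with hg
  have hgpos : 0 < g := by
    apply div_pos
    · nlinarith [pow_le_one₀ hr0.le hr1.le (n := 2), pow_le_one₀ hr0.le hr1.le (n := 3)]
    · positivity
  have hL := log_lb_aux r hr0.le
  have hstep : g ≤ (2 * Real.log (1 + r) - r) / r := by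
    rw [le_div_iff₀ hr0]
    have : g * r = 2 * (8 * r * (3 + 3 * r + r ^ 2) / (3 * (2 + r) ^ 3)) - r := by
      rw [hg]; field_simp; ring
    rw [this]; linarith
  have hsq : g ^ 2 ≤ ((2 * Real.log (1 + r) - r) / r) ^ 2 :=
    pow_le_pow_left₀ hgpos.le hstep 2
  have hr2 : 0 ≤ 1 - r ^ 2 := by nlinarith
  have hmain : (1 - r) / (1 + r) ^ 2 ≤ (1 - r ^ 2) * g ^ 2 := by
    have key : 0 ≤ 576 + 1344 * r + 816 * r ^ 2 - 464 * r ^ 3 - 828 * r ^ 4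
        - 360 * r ^ 5 - 5 * r ^ 6 + 39 * r ^ 7 + 9 * r ^ 8 := by
      nlinarith [pow_le_one₀ hr0.le hr1.le (n := 3), pow_le_one₀ hr0.le hr1.le (n := 4),
        pow_le_one₀ hr0.le hr1.le (n := 5), pow_le_one₀ hr0.le hr1.le (n := 6),
        pow_nonneg hr0.le 7, pow_nonneg hr0.le 8]
    rw [div_le_iff₀ (by positivity), hg, div_pow]
    have e : (1 - r ^ 2) * ((24 + 12 * r - 2 * r ^ 2 - 3 * r ^ 3) ^ 2 / (3 * (2 + r) ^ 3) ^ 2)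
        * (1 + r) ^ 2 - (1 - r)
        = (1 - r) * r * (576 + 1344 * r + 816 * r ^ 2 - 464 * r ^ 3 - 828 * r ^ 4
          - 360 * r ^ 5 - 5 * r ^ 6 + 39 * r ^ 7 + 9 * r ^ 8) / (9 * (2 + r) ^ 6) := by
      field_simp
      ring
    have hnn : 0 ≤ (1 - r) * r * (576 + 1344 * r + 816 * r ^ 2 - 464 * r ^ 3 - 828 * r ^ 4
        - 360 * r ^ 5 - 5 * r ^ 6 + 39 * r ^ 7 + 9 * r ^ 8) / (9 * (2 + r) ^ 6) := by
      apply div_nonneg _ (by positivity)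
      exact mul_nonneg (mul_nonneg (by linarith) hr0.le) key
    linarith [e, hnn]
  calc (1 - r) / (1 + r) ^ 2 ≤ (1 - r ^ 2) * g ^ 2 := hmain
    _ ≤ (1 - r ^ 2) * ((2 * Real.log (1 + r) - r) / r) ^ 2 := by
        exact mul_le_mul_of_nonneg_left hsq hr2
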